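/- In the equitable algebra U, for all 1 ≤ i, j ≤ n one has X_i(1 - X_jZ_j) = q_i^{A_ij}(1 - X_jZ_j)X_i, and for 1 ≤ i ≤ n and every integer m ≥ 0 one has (1 - X_iZ_i)^m = Σ_{r=0}^{m} (-1)^r [m choose r]_i q_i^{r(1-m)} X_i^r Z_i^r. -/

import Mathlib

open FreeAlgebra
open scoped TensorProduct

noncomputable section

/-- The field `𝕂(q)` of rational functions in the indeterminate `q` over `𝕂`. -/
abbrev Kq (K : Type) [Field K] : Type := RatFunc K

/-- The indeterminate `q` viewed as an element of `𝕂(q)`. -/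
def qv (K : Type) [Field K] : Kq K := RatFunc.X

/-- `q_i = q^{d_i}`, given the exponent `di = d_i`. -/
def qi (K : Type) [Field K] (di : ℕ) : Kq K := qv K ^ di

/-- The quantum integer `[m]_i = (q_i^m - q_i^{-m})/(q_i - q_i⁻¹)`. -/
def qnum (K : Type) [Field K] (di : ℕ) (m : ℤ) : Kq K :=
  (qi K di ^ m - qi K di ^ (-m)) / (qi K di - (qi K di)⁻¹)

/-- The quantum factorial `[m]_i! = [m]_i [m-1]_i ⋯ [1]_i`, with `[0]_i! = 1`. -/
def qfac (K : Type) [Field K] (di : ℕ) : ℕ → Kq K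
  | 0 => 1
  | m + 1 => qnum K di (m + 1) * qfac K di m

/-- The Gaussian binomial coefficient `[m choose r]_i = [m]_i!/([r]_i![m-r]_i!)`. -/
def qbin (K : Type) [Field K] (di m r : ℕ) : Kq K :=
  qfac K di m / (qfac K di r * qfac K di (m - r))

/-- Chevalley generators `E_i, F_i, K_i, K_i⁻¹` of `U_q(g)`. -/
inductive CGen (n : ℕ) : Type
  | E : Fin n → CGen n
  | F : Fin n → CGen n
  | K : Fin n → CGen n
  | Kinv : Fin n → CGen n

/-- The defining relations (R1)–(R7) of `U_q(g)` in the Chevalley presentation. -/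
inductive CRel (K : Type) [Field K] {n : ℕ} (A : Matrix (Fin n) (Fin n) ℤ) (d : Fin n → ℕ) :
    FreeAlgebra (Kq K) (CGen n) → FreeAlgebra (Kq K) (CGen n) → Prop
  | R1a (i : Fin n) : CRel K A d (ι (Kq K) (CGen.K i) * ι (Kq K) (CGen.Kinv i)) 1
  | R1b (i : Fin n) : CRel K A d (ι (Kq K) (CGen.Kinv i) * ι (Kq K) (CGen.K i)) 1
  | R2 (i j : Fin n) : CRel K A d (ι (Kq K) (CGen.K i) * ι (Kq K) (CGen.K j))
      (ι (Kq K) (CGen.K j) * ι (Kq K) (CGen.K i))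
  | R3 (i j : Fin n) : CRel K A d
      (ι (Kq K) (CGen.K i) * ι (Kq K) (CGen.E j) * ι (Kq K) (CGen.Kinv i))
      (qi K (d i) ^ (A i j) • ι (Kq K) (CGen.E j))
  | R4 (i j : Fin n) : CRel K A d
      (ι (Kq K) (CGen.K i) * ι (Kq K) (CGen.F j) * ι (Kq K) (CGen.Kinv i))
      (qi K (d i) ^ (-(A i j)) • ι (Kq K) (CGen.F j))
  | R5 (i j : Fin n) : CRel K A d
      (ι (Kq K) (CGen.E i) * ι (Kq K) (CGen.F j) - ι (Kq K) (CGen.F j) * ι (Kq K) (CGen.E i))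
      (if i = j then (qi K (d i) - (qi K (d i))⁻¹)⁻¹ •
        (ι (Kq K) (CGen.K i) - ι (Kq K) (CGen.Kinv i)) else 0)
  | R6 (i j : Fin n) (hij : i ≠ j) : CRel K A d
      (∑ r ∈ Finset.range ((1 - A i j).toNat + 1),
        ((-1 : Kq K) ^ r * qbin K (d i) (1 - A i j).toNat r) •
          (ι (Kq K) (CGen.E i) ^ ((1 - A i j).toNat - r) * ι (Kq K) (CGen.E j) *
            ι (Kq K) (CGen.E i) ^ r)) 0
  | R7 (i j : Fin n) (hij : i ≠ j) : CRel K A d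
      (∑ r ∈ Finset.range ((1 - A i j).toNat + 1),
        ((-1 : Kq K) ^ r * qbin K (d i) (1 - A i j).toNat r) •
          (ι (Kq K) (CGen.F i) ^ ((1 - A i j).toNat - r) * ι (Kq K) (CGen.F j) *
            ι (Kq K) (CGen.F i) ^ r)) 0

/-- The quantum group `U_q(g)` presented by generators and relations (R1)–(R7). -/
abbrev Uqg (K : Type) [Field K] {n : ℕ} (A : Matrix (Fin n) (Fin n) ℤ) (d : Fin n → ℕ) :=
  RingQuot (CRel K A d)

variable (K : Type) [Field K] {n : ℕ} (A : Matrix (Fin n) (Fin n) ℤ) (d : Fin n → ℕ)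

def genE (i : Fin n) : Uqg K A d := RingQuot.mkAlgHom (Kq K) (CRel K A d) (ι (Kq K) (CGen.E i))
def genF (i : Fin n) : Uqg K A d := RingQuot.mkAlgHom (Kq K) (CRel K A d) (ι (Kq K) (CGen.F i))
def genK (i : Fin n) : Uqg K A d := RingQuot.mkAlgHom (Kq K) (CRel K A d) (ι (Kq K) (CGen.K i))
def genKinv (i : Fin n) : Uqg K A d :=
  RingQuot.mkAlgHom (Kq K) (CRel K A d) (ι (Kq K) (CGen.Kinv i))

/-- Equitable generators `X_i, X_i⁻¹, Y_i, Z_i`. -/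
inductive EGen (n : ℕ) : Type
  | X : Fin n → EGen n
  | Xinv : Fin n → EGen n
  | Y : Fin n → EGen n
  | Z : Fin n → EGen n

/-- The defining relations (E1)–(E8) of the equitable presentation. -/
inductive ERel (K : Type) [Field K] {n : ℕ} (A : Matrix (Fin n) (Fin n) ℤ) (d : Fin n → ℕ) :
    FreeAlgebra (Kq K) (EGen n) → FreeAlgebra (Kq K) (EGen n) → Prop
  | E1a (i : Fin n) : ERel K A d (ι (Kq K) (EGen.X i) * ι (Kq K) (EGen.Xinv i)) 1
  | E1b (i : Fin n) : ERel K A d (ι (Kq K) (EGen.Xinv i) * ι (Kq K) (EGen.X i)) 1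
  | E2 (i j : Fin n) : ERel K A d (ι (Kq K) (EGen.X i) * ι (Kq K) (EGen.X j))
      (ι (Kq K) (EGen.X j) * ι (Kq K) (EGen.X i))
  | E3 (i j : Fin n) : ERel K A d
      (ι (Kq K) (EGen.Y i) * ι (Kq K) (EGen.X j) -
        qi K (d i) ^ (A i j) • (ι (Kq K) (EGen.X j) * ι (Kq K) (EGen.Y i)))
      ((1 - qi K (d i) ^ (A i j)) • (ι (Kq K) (EGen.Xinv i) * ι (Kq K) (EGen.X j)))
  | E4 (i j : Fin n) : ERel K A d
      (ι (Kq K) (EGen.X i) * ι (Kq K) (EGen.Z j) -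
        qi K (d i) ^ (A i j) • (ι (Kq K) (EGen.Z j) * ι (Kq K) (EGen.X i)))
      ((1 - qi K (d i) ^ (A i j)) • (ι (Kq K) (EGen.X i) * ι (Kq K) (EGen.Xinv j)))
  | E5 (i : Fin n) : ERel K A d
      (ι (Kq K) (EGen.Z i) * ι (Kq K) (EGen.Y i) -
        (qi K (d i) ^ 2) • (ι (Kq K) (EGen.Y i) * ι (Kq K) (EGen.Z i)))
      ((1 - qi K (d i) ^ 2) • 1)
  | E6 (i j : Fin n) (hij : i ≠ j) : ERel K A d
      (ι (Kq K) (EGen.Z i) * ι (Kq K) (EGen.Y j) -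
        qi K (d i) ^ (A i j) • (ι (Kq K) (EGen.Y j) * ι (Kq K) (EGen.Z i)))
      ((1 - qi K (d i) ^ (A i j)) • (ι (Kq K) (EGen.Xinv i) * ι (Kq K) (EGen.Xinv j)))
  | E7 (i j : Fin n) (hij : i ≠ j) : ERel K A d
      (∑ r ∈ Finset.range ((1 - A i j).toNat + 1),
        ((-1 : Kq K) ^ r * qbin K (d i) (1 - A i j).toNat r) •
          (ι (Kq K) (EGen.Y i) ^ ((1 - A i j).toNat - r) * ι (Kq K) (EGen.Y j) *
            ι (Kq K) (EGen.Y i) ^ r))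
      ((∏ s ∈ Finset.range ((-(A i j)).toNat + 1), (1 - qi K (d i) ^ (A i j + 2 * (s : ℤ)))) •
        (ι (Kq K) (EGen.Xinv i) ^ (1 - A i j).toNat * ι (Kq K) (EGen.Xinv j)))
  | E8 (i j : Fin n) (hij : i ≠ j) : ERel K A d
      (∑ r ∈ Finset.range ((1 - A i j).toNat + 1),
        ((-1 : Kq K) ^ r * qbin K (d i) (1 - A i j).toNat r) •
          (ι (Kq K) (EGen.Z i) ^ ((1 - A i j).toNat - r) * ι (Kq K) (EGen.Z j) *
            ι (Kq K) (EGen.Z i) ^ r))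
      ((∏ s ∈ Finset.range ((-(A i j)).toNat + 1), (1 - qi K (d i) ^ (A i j + 2 * (s : ℤ)))) •
        (ι (Kq K) (EGen.Xinv i) ^ (1 - A i j).toNat * ι (Kq K) (EGen.Xinv j)))

/-- The equitable algebra `U` presented by generators and relations (E1)–(E8). -/
abbrev Ueqg (K : Type) [Field K] {n : ℕ} (A : Matrix (Fin n) (Fin n) ℤ) (d : Fin n → ℕ) :=
  RingQuot (ERel K A d)

def genX (i : Fin n) : Ueqg K A d := RingQuot.mkAlgHom (Kq K) (ERel K A d) (ι (Kq K) (EGen.X i))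
def genXinv (i : Fin n) : Ueqg K A d :=
  RingQuot.mkAlgHom (Kq K) (ERel K A d) (ι (Kq K) (EGen.Xinv i))
def genY (i : Fin n) : Ueqg K A d := RingQuot.mkAlgHom (Kq K) (ERel K A d) (ι (Kq K) (EGen.Y i))
def genZ (i : Fin n) : Ueqg K A d := RingQuot.mkAlgHom (Kq K) (ERel K A d) (ι (Kq K) (EGen.Z i))

/-- `A` is a symmetrizable generalized Cartan matrix with symmetrizing positive,
relatively prime integers `d_i`, and `n ≥ 1`. -/
def IsSymmetrizableGCM {n : ℕ} (A : Matrix (Fin n) (Fin n) ℤ) (d : Fin n → ℕ) : Prop :=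
  0 < n ∧ (∀ i, A i i = 2) ∧ (∀ i j, i ≠ j → A i j ≤ 0) ∧
    (∀ i, 0 < d i) ∧ Finset.univ.gcd d = 1 ∧
    (∀ i j, (d i : ℤ) * A i j = (d j : ℤ) * A j i)

end


noncomputable section Helpers

namespace EqProof

variable (K : Type) [Field K] (di : ℕ)

lemma qv_ne_zero : qv K ≠ 0 := RatFunc.X_ne_zero

lemma qi_ne_zero : qi K di ≠ 0 := pow_ne_zero _ (qv_ne_zero K)

lemma qv_pow_ne_one {N : ℕ} (hN : 0 < N) : qv K ^ N ≠ 1 := by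
  intro h
  have : (algebraMap (Polynomial K) (RatFunc K)) (Polynomial.X ^ N) =
      (algebraMap (Polynomial K) (RatFunc K)) 1 := by
    simpa [qv, RatFunc.algebraMap_X, map_pow] using h
  have h2 := RatFunc.algebraMap_injective K this
  have := congrArg Polynomial.natDegree h2
  simp [Polynomial.natDegree_X_pow] at this
  omega

lemma qi_zpow_ne_one (hd : 0 < di) {N : ℤ} (hN : N ≠ 0) : qi K di ^ N ≠ 1 := by
  intro h
  rcases lt_or_gt_of_ne hN with h1 | h1
  · have h2 : qi K di ^ (-N) = 1 := by
      rw [zpow_neg, h, inv_one]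
    have h3 : (0:ℤ) < -N := by omega
    set M := (-N).toNat with hMdef
    have hM : ((M:ℤ)) = -N := Int.toNat_of_nonneg h3.le
    have hM0 : 0 < M := by omega
    have : qv K ^ (di * M) = 1 := by
      rw [pow_mul]
      have : qi K di ^ (M:ℤ) = 1 := by rw [hM]; exact h2
      rw [zpow_natCast] at this
      simpa [qi, ← pow_mul, mul_comm] using this
    exact qv_pow_ne_one K (by positivity) this
  · set M := N.toNat with hMdef
    have hM : ((M:ℤ)) = N := Int.toNat_of_nonneg h1.le
    have hM0 : 0 < M := by omega
    have : qv K ^ (di * M) = 1 := by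
      rw [pow_mul]
      have : qi K di ^ (M:ℤ) = 1 := by rw [hM]; exact h
      rw [zpow_natCast] at this
      simpa [qi, ← pow_mul, mul_comm] using this
    exact qv_pow_ne_one K (by positivity) this

lemma qden_ne_zero (hd : 0 < di) : qi K di - (qi K di)⁻¹ ≠ 0 := by
  intro h
  have h0 := qi_ne_zero K di
  have : qi K di ^ (2:ℤ) = 1 := by
    have h2 := sub_eq_zero.mp h
    have : qi K di * qi K di = 1 := by
      nth_rewrite 2 [h2]
      exact mul_inv_cancel₀ (qi_ne_zero K di)
    rw [zpow_two]
    exact this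
  exact qi_zpow_ne_one K di hd (by norm_num) this

lemma qnum_ne_zero (hd : 0 < di) {m : ℤ} (hm : m ≠ 0) : qnum K di m ≠ 0 := by
  apply div_ne_zero _ (qden_ne_zero K di hd)
  intro h
  have h0 := qi_ne_zero K di
  have := sub_eq_zero.mp h
  have h2 : qi K di ^ (2*m) = 1 := by
    rw [two_mul, zpow_add₀ h0]
    nth_rewrite 1 [this]
    rw [← zpow_add₀ h0, neg_add_cancel, zpow_zero]
  exact qi_zpow_ne_one K di hd (by omega) h2

lemma qfac_zero : qfac K di 0 = 1 := rfl

lemma qfac_succ (m : ℕ) : qfac K di (m+1) = qnum K di (m+1) * qfac K di m := rfl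

lemma qfac_ne_zero (hd : 0 < di) (m : ℕ) : qfac K di m ≠ 0 := by
  induction m with
  | zero => rw [qfac_zero]; exact one_ne_zero
  | succ m ih =>
    show qnum K di (m+1) * qfac K di m ≠ 0
    exact mul_ne_zero (qnum_ne_zero K di hd (by exact_mod_cast Nat.succ_ne_zero m)) ih

lemma qbin_zero (hd : 0 < di) (m : ℕ) : qbin K di m 0 = 1 := by
  rw [qbin, qfac_zero, Nat.sub_zero, one_mul, div_self (qfac_ne_zero K di hd m)]

lemma qbin_self (hd : 0 < di) (m : ℕ) : qbin K di m m = 1 := by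
  rw [qbin, Nat.sub_self, qfac_zero, mul_one, div_self (qfac_ne_zero K di hd m)]

lemma qnum_add (hd : 0 < di) (a b : ℤ) :
    qnum K di (a + b) = qi K di ^ (-a) * qnum K di b + qi K di ^ b * qnum K di a := by
  have h0 := qi_ne_zero K di
  have hD := qden_ne_zero K di hd
  unfold qnum
  rw [← mul_div_assoc, ← mul_div_assoc, ← add_div]
  congr 1
  rw [mul_sub, mul_sub, ← zpow_add₀ h0, ← zpow_add₀ h0, ← zpow_add₀ h0, ← zpow_add₀ h0]
  have e1 : -a + b = b + -a := by ring
  have e2 : -a + -b = -(a+b) := by ring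
  rw [e1, e2, add_comm b a]
  ring

lemma qbin_pascal (hd : 0 < di) (m r : ℕ) (h : r < m) :
    qbin K di (m+1) (r+1) =
      qi K di ^ (-((r:ℤ)+1)) * qbin K di m (r+1) + qi K di ^ ((m:ℤ)-r) * qbin K di m r := by
  have h0 := qi_ne_zero K di
  have hF := qfac_ne_zero K di hd m
  have hG := qfac_ne_zero K di hd r
  have hH := qfac_ne_zero K di hd (m - r - 1)
  have hN2 := qnum_ne_zero K di hd (m := (r:ℤ)+1) (by omega)
  have hN3 := qnum_ne_zero K di hd (m := ((m:ℤ)-(r:ℤ))) (by omega)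
  have key : qnum K di ((m:ℤ)+1) =
      qi K di ^ (-((r:ℤ)+1)) * qnum K di ((m:ℤ)-r) +
        qi K di ^ ((m:ℤ)-r) * qnum K di ((r:ℤ)+1) := by
    have h2 := qnum_add K di hd ((r:ℤ)+1) ((m:ℤ)-r)
    rw [show ((r:ℤ)+1) + ((m:ℤ)-r) = (m:ℤ)+1 by ring] at h2
    exact h2
  have e1 : qfac K di (m+1) = qnum K di ((m:ℤ)+1) * qfac K di m := by
    rw [qfac_succ]
  have e2 : qfac K di (r+1) = qnum K di ((r:ℤ)+1) * qfac K di r := by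
    rw [qfac_succ]
  have e3 : qfac K di (m-r) = qnum K di ((m:ℤ)-r) * qfac K di (m-r-1) := by
    rw [show m - r = (m-r-1)+1 from by omega, qfac_succ]
    congr 1
    congr 1
    omega
  rw [qbin, qbin, qbin, show m + 1 - (r+1) = m - r from by omega,
    show m - (r+1) = m - r - 1 from by omega, e1, e2, e3, key]
  field_simp

/-- The polynomial `∏_{s<r} (1 - q^{2(s+k)} T)`. -/
def Ppoly (k r : ℕ) : Polynomial (Kq K) :=
  ∏ s ∈ Finset.range r, (1 - Polynomial.C (qi K di ^ (2*((s:ℤ)+k))) * Polynomial.X)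

lemma Ppoly_zero (k : ℕ) : Ppoly K di k 0 = 1 := by
  rw [Ppoly, Finset.range_zero, Finset.prod_empty]

lemma Ppoly_succ (k r : ℕ) :
    Ppoly K di k (r+1) =
      Ppoly K di k r * (1 - Polynomial.C (qi K di ^ (2*((r:ℤ)+k))) * Polynomial.X) := by
  rw [Ppoly, Finset.prod_range_succ, Ppoly]

lemma lin_congr {e1 e2 : ℤ} (h : e1 = e2) :
    (1 - Polynomial.C (qi K di ^ e1) * Polynomial.X : Polynomial (Kq K)) =
      1 - Polynomial.C (qi K di ^ e2) * Polynomial.X := by rw [h]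

lemma Ppoly_succ' (k r : ℕ) :
    Ppoly K di k (r+1) =
      (1 - Polynomial.C (qi K di ^ (2*(k:ℤ))) * Polynomial.X) * Ppoly K di (k+1) r := by
  rw [Ppoly, Finset.prod_range_succ', mul_comm]
  congr 1
  · rw [lin_congr K di (e2 := 2*(k:ℤ)) (by push_cast; ring)]
  · rw [Ppoly]
    refine Finset.prod_congr rfl fun s _ => ?_
    exact lin_congr K di (by push_cast; ring)

/-- The coefficient `(-1)^r [m choose r] q^{r(1-m)}`. -/
def coef (m r : ℕ) : Kq K :=
  (-1 : Kq K) ^ r * qbin K di m r * qi K di ^ ((r:ℤ) * (1 - (m:ℤ)))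

/-- The auxiliary coefficient `coef m r * q^{-2r} = (-1)^r [m choose r] q^{-r(m+1)}`. -/
def acoef (m r : ℕ) : Kq K :=
  (-1 : Kq K) ^ r * qbin K di m r * qi K di ^ (-(r:ℤ) * ((m:ℤ)+1))

lemma coef_mul (m r : ℕ) :
    coef K di m r * qi K di ^ (-(2*(r:ℤ))) = acoef K di m r := by
  unfold coef acoef
  rw [mul_assoc, ← zpow_add₀ (qi_ne_zero K di),
    show (r:ℤ)*(1-(m:ℤ)) + -(2*(r:ℤ)) = -(r:ℤ)*((m:ℤ)+1) from by ring]

lemma coef_zero (hd : 0 < di) (m : ℕ) : coef K di m 0 = 1 := by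
  unfold coef
  simp [qbin_zero K di hd]

lemma acoef_zero (hd : 0 < di) (m : ℕ) : acoef K di m 0 = 1 := by
  unfold acoef
  simp [qbin_zero K di hd]

lemma coef_succ_top (hd : 0 < di) (m : ℕ) :
    coef K di (m+1) (m+1) = - acoef K di m m := by
  unfold coef acoef
  rw [qbin_self K di hd, qbin_self K di hd]
  push_cast
  rw [show ((m:ℤ)+1)*(1-((m:ℤ)+1)) = -(m:ℤ)*((m:ℤ)+1) from by ring]
  ring

lemma coef_pascal (hd : 0 < di) (m r : ℕ) (hr : r < m) :
    coef K di (m+1) (r+1) = acoef K di m (r+1) - acoef K di m r := by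
  have h0 := qi_ne_zero K di
  unfold coef acoef
  rw [qbin_pascal K di hd m r hr]
  push_cast
  have l1 : qi K di ^ (-((r:ℤ)+1)) * qi K di ^ (((r:ℤ)+1)*(1-((m:ℤ)+1))) =
      qi K di ^ (-((r:ℤ)+1)*((m:ℤ)+1)) := by
    rw [← zpow_add₀ h0]; congr 1; ring
  have l2 : qi K di ^ ((m:ℤ)-(r:ℤ)) * qi K di ^ (((r:ℤ)+1)*(1-((m:ℤ)+1))) =
      qi K di ^ (-(r:ℤ)*((m:ℤ)+1)) := by
    rw [← zpow_add₀ h0]; congr 1; ring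
  calc (-1:Kq K)^(r+1) * (qi K di ^ (-((r:ℤ)+1)) * qbin K di m (r+1) +
          qi K di ^ ((m:ℤ)-(r:ℤ)) * qbin K di m r) * qi K di ^ (((r:ℤ)+1)*(1-((m:ℤ)+1)))
      = (-1:Kq K)^(r+1) * qbin K di m (r+1) *
          (qi K di ^ (-((r:ℤ)+1)) * qi K di ^ (((r:ℤ)+1)*(1-((m:ℤ)+1)))) +
        (-1:Kq K)^(r+1) * qbin K di m r *
          (qi K di ^ ((m:ℤ)-(r:ℤ)) * qi K di ^ (((r:ℤ)+1)*(1-((m:ℤ)+1)))) := by ring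
    _ = (-1:Kq K)^(r+1) * qbin K di m (r+1) * qi K di ^ (-((r:ℤ)+1)*((m:ℤ)+1)) +
        (-1:Kq K)^(r+1) * qbin K di m r * qi K di ^ (-(r:ℤ)*((m:ℤ)+1)) := by rw [l1, l2]
    _ = (-1:Kq K)^(r+1) * qbin K di m (r+1) * qi K di ^ (-((r:ℤ)+1)*((m:ℤ)+1)) -
        (-1:Kq K)^r * qbin K di m r * qi K di ^ (-(r:ℤ)*((m:ℤ)+1)) := by ring

lemma poly_id (hd : 0 < di) (m : ℕ) :
    (Polynomial.X : Polynomial (Kq K)) ^ m =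
      ∑ r ∈ Finset.range (m + 1),
        Polynomial.C (coef K di m r) * Ppoly K di 0 r := by
  induction m with
  | zero =>
    rw [Finset.sum_range_one, Ppoly_zero, coef_zero K di hd, map_one, one_mul, pow_zero]
  | succ m ih =>
    have h0 := qi_ne_zero K di
    rw [pow_succ, ih, Finset.sum_mul]
    have hPX : ∀ r : ℕ, (Polynomial.C (coef K di m r) * Ppoly K di 0 r) * Polynomial.X
        = Polynomial.C (acoef K di m r) * Ppoly K di 0 r
          - Polynomial.C (acoef K di m r) * Ppoly K di 0 (r+1) := by
      intro r
      have h1 := Ppoly_succ K di 0 r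
      rw [show (2*((r:ℤ)+((0:ℕ):ℤ))) = 2*(r:ℤ) from by push_cast; ring] at h1
      have h2 : Polynomial.C (qi K di ^ (2*(r:ℤ))) * (Ppoly K di 0 r * Polynomial.X) =
          Ppoly K di 0 r - Ppoly K di 0 (r+1) := by
        rw [h1]; ring
      have h3 : Ppoly K di 0 r * Polynomial.X =
          Polynomial.C (qi K di ^ (-(2*(r:ℤ)))) * (Ppoly K di 0 r - Ppoly K di 0 (r+1)) := by
        rw [← h2, ← mul_assoc, ← map_mul, ← zpow_add₀ h0]
        norm_num
      rw [mul_assoc, h3, ← mul_assoc, ← map_mul, coef_mul K di m r, mul_sub]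
    have hL : ∑ r ∈ Finset.range (m+1),
          (Polynomial.C (coef K di m r) * Ppoly K di 0 r) * Polynomial.X
        = ∑ r ∈ Finset.range (m+1),
          (Polynomial.C (acoef K di m r) * Ppoly K di 0 r
            - Polynomial.C (acoef K di m r) * Ppoly K di 0 (r+1)) :=
      Finset.sum_congr rfl fun r _ => hPX r
    rw [hL, Finset.sum_sub_distrib]
    rw [Finset.sum_range_succ' (fun r => Polynomial.C (acoef K di m r) * Ppoly K di 0 r) m]
    rw [Finset.sum_range_succ (fun r => Polynomial.C (acoef K di m r) * Ppoly K di 0 (r+1)) m]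
    rw [Finset.sum_range_succ' (fun r => Polynomial.C (coef K di (m+1) r) * Ppoly K di 0 r) (m+1)]
    rw [Finset.sum_range_succ (fun r => Polynomial.C (coef K di (m+1) (r+1)) * Ppoly K di 0 (r+1)) m]
    have hmid : ∑ r ∈ Finset.range m, Polynomial.C (coef K di (m+1) (r+1)) * Ppoly K di 0 (r+1)
        = (∑ r ∈ Finset.range m, Polynomial.C (acoef K di m (r+1)) * Ppoly K di 0 (r+1))
          - ∑ r ∈ Finset.range m, Polynomial.C (acoef K di m r) * Ppoly K di 0 (r+1) := by
      rw [← Finset.sum_sub_distrib]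
      refine Finset.sum_congr rfl fun r hr => ?_
      rw [coef_pascal K di hd m r (Finset.mem_range.mp hr), map_sub, sub_mul]
    rw [hmid, coef_succ_top K di hd m, coef_zero K di hd, acoef_zero K di hd, map_one, map_neg,
      neg_mul]
    abel

lemma aux_sub {R B : Type} [CommRing R] [AddCommGroup B] [Module R B] (a : R) (x y : B) :
    x - ((1-a) • x + a • y) = a • x - a • y := by
  rw [sub_smul, one_smul]
  abel

variable {n : ℕ} (A : Matrix (Fin n) (Fin n) ℤ) (d : Fin n → ℕ)

lemma rel_XXinv (i : Fin n) : genX K A d i * genXinv K A d i = 1 := by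
  have h := RingQuot.mkAlgHom_rel (Kq K) (ERel.E1a (K := K) (A := A) (d := d) i)
  simpa only [genX, genXinv, map_mul, map_one] using h

lemma rel_XX (i j : Fin n) : genX K A d i * genX K A d j = genX K A d j * genX K A d i := by
  have h := RingQuot.mkAlgHom_rel (Kq K) (ERel.E2 (K := K) (A := A) (d := d) i j)
  simpa only [genX, map_mul] using h

lemma rel_E4 (i j : Fin n) :
    genX K A d i * genZ K A d j - qi K (d i) ^ (A i j) • (genZ K A d j * genX K A d i) =
      (1 - qi K (d i) ^ (A i j)) • (genX K A d i * genXinv K A d j) := by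
  have h := RingQuot.mkAlgHom_rel (Kq K) (ERel.E4 (K := K) (A := A) (d := d) i j)
  simpa only [genX, genZ, genXinv, map_mul, map_sub, map_smul] using h

lemma part1 (i j : Fin n) :
    genX K A d i * (1 - genX K A d j * genZ K A d j) =
      qi K (d i) ^ (A i j) • ((1 - genX K A d j * genZ K A d j) * genX K A d i) := by
  set a : Kq K := qi K (d i) ^ (A i j) with ha
  have h1 : genX K A d i * genZ K A d j =
      (1 - a) • (genX K A d i * genXinv K A d j) + a • (genZ K A d j * genX K A d i) :=
    sub_eq_iff_eq_add.mp (rel_E4 K A d i j)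
  have h2 : genX K A d j * (genX K A d i * genXinv K A d j) = genX K A d i := by
    rw [← mul_assoc, rel_XX K A d j i, mul_assoc, rel_XXinv K A d j, mul_one]
  have h3 : genX K A d i * (genX K A d j * genZ K A d j) =
      (1-a) • genX K A d i + a • (genX K A d j * genZ K A d j * genX K A d i) := by
    calc genX K A d i * (genX K A d j * genZ K A d j)
        = (genX K A d i * genX K A d j) * genZ K A d j := (mul_assoc _ _ _).symm
      _ = (genX K A d j * genX K A d i) * genZ K A d j := by rw [rel_XX K A d i j]
      _ = genX K A d j * (genX K A d i * genZ K A d j) := mul_assoc _ _ _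
      _ = genX K A d j * ((1 - a) • (genX K A d i * genXinv K A d j) +
            a • (genZ K A d j * genX K A d i)) := by rw [h1]
      _ = (1-a) • (genX K A d j * (genX K A d i * genXinv K A d j)) +
            a • (genX K A d j * (genZ K A d j * genX K A d i)) := by
          rw [mul_add, mul_smul_comm, mul_smul_comm]
      _ = (1-a) • genX K A d i + a • (genX K A d j * genZ K A d j * genX K A d i) := by
          rw [h2, mul_assoc]
  rw [mul_sub, mul_one, h3, sub_mul, one_mul, smul_sub]
  exact aux_sub a _ _

lemma stepA (i : Fin n) (h2 : A i i = 2) :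
    genX K A d i * (1 - genX K A d i * genZ K A d i) =
      (qi K (d i) ^ (2:ℤ)) • ((1 - genX K A d i * genZ K A d i) * genX K A d i) := by
  have h := part1 K A d i i
  rw [h2] at h
  exact h

lemma step_lin (i : Fin n) (h2 : A i i = 2) (e : ℤ) :
    genX K A d i * (1 - qi K (d i) ^ e • (1 - genX K A d i * genZ K A d i)) =
      (1 - qi K (d i) ^ (e+2) • (1 - genX K A d i * genZ K A d i)) * genX K A d i := by
  have h0 := qi_ne_zero K (d i)
  rw [mul_sub, mul_one, sub_mul, one_mul, mul_smul_comm, stepA K A d i h2, smul_smul,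
    ← zpow_add₀ h0, smul_mul_assoc]

lemma stepA' (i : Fin n) (h2 : A i i = 2) (k r : ℕ) :
    genX K A d i * Polynomial.aeval (1 - genX K A d i * genZ K A d i) (Ppoly K (d i) k r) =
      Polynomial.aeval (1 - genX K A d i * genZ K A d i) (Ppoly K (d i) (k+1) r) *
        genX K A d i := by
  induction r with
  | zero => rw [Ppoly_zero, Ppoly_zero, map_one, mul_one, one_mul]
  | succ r ih =>
    have hs := step_lin K A d i h2 (2*((r:ℤ)+(k:ℤ)))
    rw [Ppoly_succ, Ppoly_succ, map_mul, map_mul, ← mul_assoc, ih, mul_assoc, mul_assoc]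
    congr 1
    rw [lin_congr K (d i) (e1 := 2*((r:ℤ)+((k+1:ℕ):ℤ))) (e2 := 2*((r:ℤ)+(k:ℤ))+2)
      (by push_cast; ring)]
    simp only [map_sub, map_one, map_mul, Polynomial.aeval_X, Polynomial.aeval_C,
      ← Algebra.smul_def]
    exact hs

lemma stepB (i : Fin n) (h2 : A i i = 2) (r : ℕ) :
    genX K A d i ^ r * genZ K A d i ^ r =
      Polynomial.aeval (1 - genX K A d i * genZ K A d i) (Ppoly K (d i) 0 r) := by
  induction r with
  | zero => rw [Ppoly_zero, map_one, pow_zero, pow_zero, one_mul]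
  | succ r ih =>
    have hXZ : genX K A d i * genZ K A d i =
        Polynomial.aeval (1 - genX K A d i * genZ K A d i)
          ((1 : Polynomial (Kq K)) - Polynomial.X) := by
      rw [map_sub, map_one, Polynomial.aeval_X]
      exact (sub_sub_cancel _ _).symm
    have hP : Ppoly K (d i) 0 (r+1) = Ppoly K (d i) 1 r * (1 - Polynomial.X) := by
      rw [Ppoly_succ', mul_comm]
      congr 1
      rw [lin_congr K (d i) (e2 := 0) (by norm_num)]
      norm_num
    rw [pow_succ', pow_succ, mul_assoc, ← mul_assoc (genX K A d i ^ r), ih, ← mul_assoc,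
      stepA' K A d i h2 0 r, mul_assoc, hP, map_mul]
    exact congrArg (fun t =>
      (Polynomial.aeval (1 - genX K A d i * genZ K A d i)) (Ppoly K (d i) 1 r) * t) hXZ

end EqProof

end Helpers

/-- In the equitable algebra `U`:
`X_i(1 - X_jZ_j) = q_i^{A_ij}(1 - X_jZ_j)X_i` for all `i, j`, and
`(1 - X_iZ_i)^m = Σ_{r=0}^{m} (-1)^r [m choose r]_i q_i^{r(1-m)} X_i^r Z_i^r`
for all `i` and `m ≥ 0`. -/
theorem equitable_XZ_commutation_and_power (K : Type) [Field K] {n : ℕ}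
    (A : Matrix (Fin n) (Fin n) ℤ) (d : Fin n → ℕ) (hA : IsSymmetrizableGCM A d) :
    (∀ i j : Fin n, genX K A d i * (1 - genX K A d j * genZ K A d j) =
      qi K (d i) ^ (A i j) • ((1 - genX K A d j * genZ K A d j) * genX K A d i)) ∧
    (∀ (i : Fin n) (m : ℕ), (1 - genX K A d i * genZ K A d i) ^ m =
      ∑ r ∈ Finset.range (m + 1),
        ((-1 : Kq K) ^ r * qbin K (d i) m r * qi K (d i) ^ ((r : ℤ) * (1 - (m : ℤ)))) •
          (genX K A d i ^ r * genZ K A d i ^ r)) := by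
  obtain ⟨hn, hAii, hneg, hdpos, hgcd, hsym⟩ := hA
  refine ⟨fun i j => EqProof.part1 K A d i j, fun i m => ?_⟩
  have hd := hdpos i
  have h2 := hAii i
  have main : (1 - genX K A d i * genZ K A d i) ^ m =
      ∑ r ∈ Finset.range (m+1),
        EqProof.coef K (d i) m r • (genX K A d i ^ r * genZ K A d i ^ r) := by
    have hW : (1 - genX K A d i * genZ K A d i) ^ m =
        Polynomial.aeval (1 - genX K A d i * genZ K A d i)
          ((Polynomial.X : Polynomial (Kq K)) ^ m) := by
      rw [map_pow, Polynomial.aeval_X]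
    rw [hW, EqProof.poly_id K (d i) hd m, map_sum]
    refine Finset.sum_congr rfl fun r _ => ?_
    rw [map_mul, Polynomial.aeval_C, ← EqProof.stepB K A d i h2 r]
    simp only [← Algebra.smul_def]
  rw [main]
  refine Finset.sum_congr rfl fun r _ => ?_
  simp only [EqProof.coef]
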